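/- Suppose I and I' are lexsegment ideals of S = K[x_1,…,x_n], generated by monomials of degree d and d' respectively, with μ(I) = μ(I') and d' ≥ d. Then the Hilbert series satisfy H_{I'}(T) = T^{d'−d} H_I(T); equivalently, the Hilbert functions satisfy H(I, d+δ) = H(I', d'+δ) for all δ ≥ 0. -/

import Mathlib

noncomputable section

open MvPolynomial

/-- The total degree of an exponent vector. -/
def edeg {n : ℕ} (a : Fin n →₀ ℕ) : ℕ := ∑ i, a i

/-- An exponent vector is squarefree if every exponent is at most 1. -/
def IsSqfree {n : ℕ} (a : Fin n →₀ ℕ) : Prop := ∀ i, a i ≤ 1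

/-- The set of exponent vectors of monomials belonging to the ideal `I`. -/
def expSet {K : Type} [Field K] {n : ℕ} (I : Ideal (MvPolynomial (Fin n) K)) :
    Set (Fin n →₀ ℕ) := {a | (monomial a (1 : K)) ∈ I}

/-- `I` is generated by monomials `x^a` with `a` satisfying the predicate `P`. -/
def GenBy {K : Type} [Field K] {n : ℕ} (I : Ideal (MvPolynomial (Fin n) K))
    (P : (Fin n →₀ ℕ) → Prop) : Prop :=
  ∃ G : Set (Fin n →₀ ℕ), (∀ a ∈ G, P a) ∧
    I = Ideal.span ((fun a => (monomial a (1 : K))) '' G)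

/-- `I` is a monomial ideal. -/
def IsMonomialIdeal {K : Type} [Field K] {n : ℕ} (I : Ideal (MvPolynomial (Fin n) K)) : Prop :=
  GenBy I fun _ => True

/-- `I` is a squarefree monomial ideal. -/
def IsSqfreeMonomialIdeal {K : Type} [Field K] {n : ℕ}
    (I : Ideal (MvPolynomial (Fin n) K)) : Prop := GenBy I IsSqfree

/-- `x^a >_lex x^b` in the lexicographic order with `x_1 > x_2 > ⋯ > x_n`. -/
def lexGT {n : ℕ} (a b : Fin n →₀ ℕ) : Prop :=
  ∃ i : Fin n, (∀ j : Fin n, j < i → a j = b j) ∧ b i < a i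

/-- `I` is a lexsegment ideal. -/
def IsLexsegment {K : Type} [Field K] {n : ℕ} (I : Ideal (MvPolynomial (Fin n) K)) : Prop :=
  IsMonomialIdeal I ∧ ∀ a b : Fin n →₀ ℕ, (monomial a (1 : K)) ∈ I → edeg b = edeg a →
    lexGT b a → (monomial b (1 : K)) ∈ I

/-- `I` is a squarefree lexsegment ideal. -/
def IsSqfreeLexsegment {K : Type} [Field K] {n : ℕ}
    (I : Ideal (MvPolynomial (Fin n) K)) : Prop :=
  IsSqfreeMonomialIdeal I ∧ ∀ a b : Fin n →₀ ℕ, IsSqfree a → IsSqfree b →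
    (monomial a (1 : K)) ∈ I → edeg b = edeg a → lexGT b a → (monomial b (1 : K)) ∈ I

/-- The minimal number of generators of an ideal. -/
def mu {K : Type} [Field K] {n : ℕ} (I : Ideal (MvPolynomial (Fin n) K)) : ℕ :=
  sInf {m | ∃ G : Finset (MvPolynomial (Fin n) K), G.card = m ∧ I = Ideal.span (G : Set _)}

/-- `ξ_k = ∑_{j=1}^k C(2j-1, j)`. -/
def xi (k : ℕ) : ℕ := ∑ j ∈ Finset.Icc 1 k, (2 * j - 1).choose j

/-- The Hilbert function of `I`: the `K`-dimension of the degree-`j` component of `I`. -/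
def hilb {K : Type} [Field K] {n : ℕ} (I : Ideal (MvPolynomial (Fin n) K)) (j : ℕ) : ℕ :=
  Module.finrank K ↥((Submodule.restrictScalars K I) ⊓ homogeneousSubmodule (Fin n) K j)

/-- The Hilbert function of `I` extended to all integer degrees. -/
def hilbZ {K : Type} [Field K] {n : ℕ} (I : Ideal (MvPolynomial (Fin n) K)) (j : ℤ) : ℕ :=
  if 0 ≤ j then hilb I j.toNat else 0

/-- The Hilbert function of a standard graded polynomial ring in `d` variables,
at degree `t ∈ ℤ`. -/
def polyHilb (d : ℕ) (t : ℤ) : ℕ :=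
  if t < 0 then 0 else if d = 0 then (if t = 0 then 1 else 0) else (t.toNat + (d - 1)).choose (d - 1)

/-- A (standard graded) Hilbert decomposition of `I` all of whose retracts are polynomial
rings in at least `k` variables: `I ≅ ⊕ᵢ Sᵢ(-sᵢ)` as graded `K`-vector spaces, where `Sᵢ`
is a graded algebra retract of `S`, i.e. a polynomial ring in `dd i ≥ k` variables. -/
def HilbertDecomp1 {K : Type} [Field K] {n : ℕ} (I : Ideal (MvPolynomial (Fin n) K))
    (k : ℕ) : Prop :=
  ∃ (ι : Type) (_ : Fintype ι) (dd : ι → ℕ) (s : ι → ℤ),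
    (∀ i, k ≤ dd i) ∧ ∀ j : ℤ, hilbZ I j = ∑ i, polyHilb (dd i) (j - s i)

/-- The Hilbert depth of `I` in the standard graded sense. -/
def hdepth1 {K : Type} [Field K] {n : ℕ} (I : Ideal (MvPolynomial (Fin n) K)) : ℕ∞ :=
  sSup {k : ℕ∞ | ∃ m : ℕ, HilbertDecomp1 I m ∧ k = m}

/-- The set of exponent vectors `u + ℕ^Z`, corresponding to the Stanley space `x^u K[Z]`. -/
def cone {n : ℕ} (u : Fin n →₀ ℕ) (Z : Finset (Fin n)) : Set (Fin n →₀ ℕ) :=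
  {a | (∀ j, u j ≤ a j) ∧ ∀ j ∉ Z, a j = u j}

/-- A Stanley decomposition, with all Stanley spaces of dimension at least `k`, of the
`ℤⁿ`-graded module whose monomial basis has exponent set `A`. -/
def StanleyPartN {n : ℕ} (A : Set (Fin n →₀ ℕ)) (k : ℕ) : Prop :=
  ∃ (ι : Type) (_ : Fintype ι) (u : ι → (Fin n →₀ ℕ)) (Z : ι → Finset (Fin n)),
    (∀ i, k ≤ (Z i).card) ∧ (∀ i, cone (u i) (Z i) ⊆ A) ∧
    (∀ a ∈ A, ∃! i, a ∈ cone (u i) (Z i))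

/-- The multigraded Stanley depth of the `ℤⁿ`-graded module whose monomial basis has
exponent set `A`. -/
def sdepthN {n : ℕ} (A : Set (Fin n →₀ ℕ)) : ℕ∞ :=
  sSup {k : ℕ∞ | ∃ m : ℕ, StanleyPartN A m ∧ k = m}

/-- A multigraded Hilbert decomposition of the monomial ideal `I`, with all retracts
polynomial rings in at least `k` variables: the multigraded Hilbert function of `I`
(which takes values 0 and 1) equals the sum of the multigraded Hilbert functions of
the shifted retracts `x^{u i} K[Z i]`. -/
def HilbertDecompN {K : Type} [Field K] {n : ℕ} (I : Ideal (MvPolynomial (Fin n) K))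
    (k : ℕ) : Prop :=
  ∃ (ι : Type) (_ : Fintype ι) (u : ι → (Fin n →₀ ℕ)) (Z : ι → Finset (Fin n)),
    (∀ i, k ≤ (Z i).card) ∧
    (∀ a : Fin n →₀ ℕ, (a ∈ expSet I ↔ ∃ i, a ∈ cone (u i) (Z i)) ∧
      (∀ i i', a ∈ cone (u i) (Z i) → a ∈ cone (u i') (Z i') → i = i'))

/-- The multigraded Hilbert depth of a monomial ideal `I`. -/
def hdepthN {K : Type} [Field K] {n : ℕ} (I : Ideal (MvPolynomial (Fin n) K)) : ℕ∞ :=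
  sSup {k : ℕ∞ | ∃ m : ℕ, HilbertDecompN I m ∧ k = m}

/-- The graded maximal ideal `(x_1, …, x_n)`. -/
def maxIdeal (K : Type) [Field K] (n : ℕ) : Ideal (MvPolynomial (Fin n) K) :=
  Ideal.span (Set.range X)

/-- The depth of a module `M` over `S = K[x_1,…,x_n]` with respect to the graded maximal
ideal: the supremum of lengths of `M`-regular sequences in `(x_1,…,x_n)`. -/
def mdepth (K : Type) [Field K] (n : ℕ) (M : Type)
    [AddCommGroup M] [Module (MvPolynomial (Fin n) K) M] : ℕ∞ :=
  sSup {k : ℕ∞ | ∃ rs : List (MvPolynomial (Fin n) K),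
    (∀ r ∈ rs, r ∈ maxIdeal K n) ∧ RingTheory.Sequence.IsRegular M rs ∧ k = rs.length}

/-- The quotient module `I/J` for ideals `J ≤ I`. -/
def quotMod {K : Type} [Field K] {n : ℕ} (I J : Ideal (MvPolynomial (Fin n) K)) : Type :=
  ↥I ⧸ (Submodule.comap (Submodule.subtype I) J)

instance {K : Type} [Field K] {n : ℕ} (I J : Ideal (MvPolynomial (Fin n) K)) :
    AddCommGroup (quotMod I J) := by unfold quotMod; infer_instance

instance {K : Type} [Field K] {n : ℕ} (I J : Ideal (MvPolynomial (Fin n) K)) :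
    Module (MvPolynomial (Fin n) K) (quotMod I J) := by unfold quotMod; infer_instance

/-- `ρ_j(I\J)`: the number of squarefree monomials of degree `j` in `I ∖ J`. -/
def rho {K : Type} [Field K] {n : ℕ} (I J : Ideal (MvPolynomial (Fin n) K)) (j : ℕ) : ℕ :=
  Set.ncard {a : Fin n →₀ ℕ | IsSqfree a ∧ edeg a = j ∧ a ∈ expSet I ∧ a ∉ expSet J}

/-- `ρ_j(I)`: the number of squarefree monomials of degree `j` in `I`. -/
def rhoI {K : Type} [Field K] {n : ℕ} (I : Ideal (MvPolynomial (Fin n) K)) (j : ℕ) : ℕ :=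
  Set.ncard {a : Fin n →₀ ℕ | IsSqfree a ∧ edeg a = j ∧ a ∈ expSet I}

/-- `I` is a stable monomial ideal. Here `j` plays the role of `m(u)`, the largest index of
a variable dividing `u = x^a`. -/
def IsStable {K : Type} [Field K] {n : ℕ} (I : Ideal (MvPolynomial (Fin n) K)) : Prop :=
  IsMonomialIdeal I ∧ ∀ a : Fin n →₀ ℕ, (monomial a (1 : K)) ∈ I →
    ∀ j : Fin n, a j ≠ 0 → (∀ l, j < l → a l = 0) → ∀ i, i < j →
      (monomial (a + Finsupp.single i 1 - Finsupp.single j 1) (1 : K)) ∈ I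

/-- `I` is a squarefree stable monomial ideal. -/
def IsSqfreeStable {K : Type} [Field K] {n : ℕ} (I : Ideal (MvPolynomial (Fin n) K)) : Prop :=
  IsSqfreeMonomialIdeal I ∧ ∀ a : Fin n →₀ ℕ, IsSqfree a → (monomial a (1 : K)) ∈ I →
    ∀ j : Fin n, a j ≠ 0 → (∀ l, j < l → a l = 0) → ∀ i, i < j → a i = 0 →
      (monomial (a + Finsupp.single i 1 - Finsupp.single j 1) (1 : K)) ∈ I

/-- `I` is a squarefree strongly stable monomial ideal. -/
def IsSqfreeStronglyStable {K : Type} [Field K] {n : ℕ}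
    (I : Ideal (MvPolynomial (Fin n) K)) : Prop :=
  IsSqfreeMonomialIdeal I ∧ ∀ a : Fin n →₀ ℕ, IsSqfree a → (monomial a (1 : K)) ∈ I →
    ∀ i : Fin n, a i ≠ 0 → ∀ j, j < i → a j = 0 →
      (monomial (a + Finsupp.single j 1 - Finsupp.single i 1) (1 : K)) ∈ I

/-- The exponent vectors of the minimal monomial generators of a monomial ideal:
the monomials of `I` minimal with respect to divisibility. -/
def minGens {K : Type} [Field K] {n : ℕ} (I : Ideal (MvPolynomial (Fin n) K)) :
    Set (Fin n →₀ ℕ) := {a | a ∈ expSet I ∧ ∀ b ∈ expSet I, b ≤ a → b = a}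

/-- `m(u)`: the largest index (1-based) of a variable dividing `x^a`; `0` if `a = 0`. -/
def mvar {n : ℕ} (a : Fin n →₀ ℕ) : ℕ := a.support.sup (fun i => (i : ℕ) + 1)

/-- `m(I) = max { m(u) : u ∈ G(I) }`. -/
def mIdeal {K : Type} [Field K] {n : ℕ} (I : Ideal (MvPolynomial (Fin n) K)) : ℕ :=
  sSup {m | ∃ a ∈ minGens I, m = mvar a}

open MvPolynomial

/-- The `K`-subspace `Aᵢ·xᵢ` of `S`, where `Aᵢ` is the subalgebra generated by `B`. -/
def stSpace {K : Type} [Field K] {n : ℕ} (B : Finset (MvPolynomial (Fin n) K))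
    (x : MvPolynomial (Fin n) K) : Submodule K (MvPolynomial (Fin n) K) :=
  (Subalgebra.toSubmodule (Algebra.adjoin K (B : Set (MvPolynomial (Fin n) K)))).map
    (LinearMap.mulLeft K x)

/-- A standard graded Stanley decomposition of the ideal `I` with all Stanley spaces of
depth at least `k`: a finite family of graded algebra retracts `Sᵢ = K[Bᵢ]` (generated by
`k ≤ |Bᵢ|` linearly independent linear forms) and homogeneous elements `xᵢ ∈ I` with
`Sᵢ ∩ ann(xᵢ) = 0`, such that `I = ⊕ᵢ Sᵢ xᵢ` as graded `K`-vector spaces. -/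
def StanleyDecomp1 {K : Type} [Field K] {n : ℕ} (I : Ideal (MvPolynomial (Fin n) K))
    (k : ℕ) : Prop :=
  ∃ (ι : Type) (_ : Fintype ι) (B : ι → Finset (MvPolynomial (Fin n) K))
    (x : ι → MvPolynomial (Fin n) K) (d : ι → ℕ),
      (∀ i, ∀ b ∈ B i, b ∈ homogeneousSubmodule (Fin n) K 1) ∧
      (∀ i, LinearIndependent K (fun b : (B i : Set (MvPolynomial (Fin n) K)) =>
        (b : MvPolynomial (Fin n) K))) ∧
      (∀ i, k ≤ (B i).card) ∧
      (∀ i, x i ∈ I) ∧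
      (∀ i, x i ∈ homogeneousSubmodule (Fin n) K (d i)) ∧
      (∀ i, ∀ a ∈ Algebra.adjoin K ((B i : Set (MvPolynomial (Fin n) K))),
        a * x i = 0 → a = 0) ∧
      (iSup (fun i => stSpace (B i) (x i)) = Submodule.restrictScalars K I) ∧
      (iSupIndep fun i => stSpace (B i) (x i))

/-- The standard graded Stanley depth of `I`. -/
def sdepth1 {K : Type} [Field K] {n : ℕ} (I : Ideal (MvPolynomial (Fin n) K)) : ℕ∞ :=
  sSup {k : ℕ∞ | ∃ m : ℕ, StanleyDecomp1 I m ∧ k = m}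

/-- The subspace `S₁ · V` of `S`. -/
def mulS1 {K : Type} [Field K] {n : ℕ} (V : Submodule K (MvPolynomial (Fin n) K)) :
    Submodule K (MvPolynomial (Fin n) K) :=
  Submodule.span K {p | ∃ l ∈ homogeneousSubmodule (Fin n) K 1, ∃ v ∈ V, p = l * v}

/-- A lexsegment set of monomials of degree `d`. -/
def IsLexSet {n : ℕ} (d : ℕ) (L : Set (Fin n →₀ ℕ)) : Prop :=
  (∀ a ∈ L, edeg a = d) ∧ ∀ a ∈ L, ∀ b : Fin n →₀ ℕ, edeg b = d → lexGT b a → b ∈ L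

/-- `V ⊆ S_d` is a Gotzmann space: `dim_K (S₁·V) = dim_K (S₁·lex(V))`, where `lex(V)` is
spanned by the lexsegment set of monomials of degree `d` of cardinality `dim_K V`. -/
def IsGotzmannSpace {K : Type} [Field K] {n : ℕ} (d : ℕ)
    (V : Submodule K (MvPolynomial (Fin n) K)) : Prop :=
  ∃ L : Finset (Fin n →₀ ℕ), IsLexSet (n := n) d (L : Set (Fin n →₀ ℕ)) ∧ L.card = Module.finrank K ↥V ∧
    Module.finrank K ↥(mulS1 V) =
      Module.finrank K ↥(mulS1 (Submodule.span K
        ((fun a => (monomial a (1 : K))) '' (L : Set (Fin n →₀ ℕ)))))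

/-- `I` is a homogeneous ideal in the standard grading. -/
def IsHomogeneousIdeal {K : Type} [Field K] {n : ℕ}
    (I : Ideal (MvPolynomial (Fin n) K)) : Prop :=
  ∀ p ∈ I, ∀ k : ℕ, homogeneousComponent k p ∈ I

/-- `I` is a Gotzmann ideal: each homogeneous component `I_k` is a Gotzmann space. -/
def IsGotzmannIdeal {K : Type} [Field K] {n : ℕ}
    (I : Ideal (MvPolynomial (Fin n) K)) : Prop :=
  IsHomogeneousIdeal I ∧ ∀ k : ℕ,
    IsGotzmannSpace k ((Submodule.restrictScalars K I) ⊓ homogeneousSubmodule (Fin n) K k)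

/-- `I` is generated by homogeneous elements of degree `d`. -/
def GenInDegHomog {K : Type} [Field K] {n : ℕ} (I : Ideal (MvPolynomial (Fin n) K))
    (d : ℕ) : Prop :=
  ∃ G : Set (MvPolynomial (Fin n) K), (∀ g ∈ G, g ∈ homogeneousSubmodule (Fin n) K d) ∧
    I = Ideal.span G

section Aux

open Finsupp

variable {K : Type} [Field K] {n : ℕ}

lemma edeg_eq_degree (a : Fin n →₀ ℕ) : edeg a = a.degree := by
  rw [Finsupp.degree, edeg]
  exact (Finset.sum_subset (Finset.subset_univ _)
    (by simp +contextual [Finsupp.notMem_support_iff])).symm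

lemma edeg_add (a b : Fin n →₀ ℕ) : edeg (a + b) = edeg a + edeg b := by
  simp [edeg, Finset.sum_add_distrib]

lemma edeg_mono {a b : Fin n →₀ ℕ} (h : a ≤ b) : edeg a ≤ edeg b :=
  Finset.sum_le_sum fun i _ => Finsupp.le_def.mp h i

lemma edeg_eq_zero {a : Fin n →₀ ℕ} (h : edeg a = 0) : a = 0 := by
  ext i
  exact Finset.sum_eq_zero_iff.mp h i (Finset.mem_univ i)

lemma edeg_single (i : Fin n) (e : ℕ) : edeg (Finsupp.single i e) = e := by
  simp [edeg, Finsupp.single_apply]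

lemma finite_edeg_eq (j : ℕ) : {b : Fin n →₀ ℕ | edeg b = j}.Finite := by
  apply (Set.finite_Iic (Finsupp.equivFunOnFinite.symm fun _ => j)).subset
  intro b hb
  rw [Set.mem_Iic, Finsupp.le_def]
  intro i
  have h1 : b i ≤ edeg b := Finset.single_le_sum (fun i _ => Nat.zero_le _) (Finset.mem_univ i)
  have hbj : edeg b = j := hb
  show b i ≤ j
  exact hbj ▸ h1

lemma span_exp (I : Ideal (MvPolynomial (Fin n) K)) (d : ℕ)
    (hgen : GenBy I (fun a => edeg a = d)) :
    I = Ideal.span ((fun a => (monomial a (1:K))) '' {a | edeg a = d ∧ a ∈ expSet I}) := by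
  obtain ⟨G, hG, rfl⟩ := hgen
  apply le_antisymm
  · apply Ideal.span_mono
    rintro p ⟨a, ha, rfl⟩
    exact ⟨a, ⟨hG a ha, Ideal.subset_span ⟨a, ha, rfl⟩⟩, rfl⟩
  · rw [Ideal.span_le]
    rintro p ⟨a, ⟨_, ha⟩, rfl⟩
    exact ha

lemma mem_iff_exists {I : Ideal (MvPolynomial (Fin n) K)} {d : ℕ}
    (hgen : GenBy I (fun a => edeg a = d)) (p : MvPolynomial (Fin n) K) :
    p ∈ I ↔ ∀ b ∈ p.support, ∃ a, (edeg a = d ∧ a ∈ expSet I) ∧ a ≤ b := by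
  conv_lhs => rw [span_exp I d hgen]
  rw [mem_ideal_span_monomial_image]
  simp only [Set.mem_setOf_eq]

lemma expSet_iff {I : Ideal (MvPolynomial (Fin n) K)} {d : ℕ}
    (hgen : GenBy I (fun a => edeg a = d)) (b : Fin n →₀ ℕ) :
    b ∈ expSet I ↔ ∃ a, (edeg a = d ∧ a ∈ expSet I) ∧ a ≤ b := by
  classical
  show (monomial b (1:K)) ∈ I ↔ _
  rw [mem_iff_exists hgen, support_monomial, if_neg one_ne_zero]
  simp

lemma inf_homog_eq_span {I : Ideal (MvPolynomial (Fin n) K)} {d : ℕ}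
    (hgen : GenBy I (fun a => edeg a = d)) (j : ℕ) :
    (Submodule.restrictScalars K I ⊓ homogeneousSubmodule (Fin n) K j) =
      Submodule.span K ((fun a => (monomial a (1:K))) '' {b | edeg b = j ∧ b ∈ expSet I}) := by
  apply le_antisymm
  · rintro p ⟨hpI, hpH⟩
    rw [← p.support_sum_monomial_coeff]
    apply Submodule.sum_mem
    intro b hb
    have hb' : coeff b p ≠ 0 := MvPolynomial.mem_support_iff.mp hb
    have hdeg : edeg b = j := by
      rw [edeg_eq_degree]
      by_contra h
      exact hb' (((mem_homogeneousSubmodule _ _).mp hpH).coeff_eq_zero h)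
    have hbI : b ∈ expSet I := by
      obtain ⟨a, ⟨had, haI⟩, hab⟩ := (mem_iff_exists hgen p).mp hpI b hb
      have hmono : monomial b (1:K) = monomial (b - a) 1 * monomial a 1 := by
        rw [monomial_mul, one_mul, tsub_add_cancel_of_le hab]
      show monomial b (1:K) ∈ I
      rw [hmono]
      exact Ideal.mul_mem_left _ _ haI
    have hrw : monomial b (coeff b p) = (coeff b p) • monomial b (1:K) := by
      rw [smul_monomial, smul_eq_mul, mul_one]
    rw [hrw]
    exact Submodule.smul_mem _ _ (Submodule.subset_span ⟨b, ⟨hdeg, hbI⟩, rfl⟩)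
  · rw [Submodule.span_le]
    rintro p ⟨b, ⟨hdeg, hbI⟩, rfl⟩
    exact ⟨hbI, isHomogeneous_monomial _ (by rw [← edeg_eq_degree]; exact hdeg)⟩

lemma finrank_span_monomials {S : Set (Fin n →₀ ℕ)} (hS : S.Finite) :
    Module.finrank K ↥(Submodule.span K ((fun a => (monomial a (1:K))) '' S)) = S.ncard := by
  have hinj : Function.Injective (fun a : Fin n →₀ ℕ => monomial a (1:K)) :=
    monomial_left_injective one_ne_zero
  have hfin : ((fun a => monomial a (1:K)) '' S).Finite := hS.image _
  have := hfin.fintype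
  have hli : LinearIndependent K
      ((↑) : ((fun a => monomial a (1:K)) '' S) → MvPolynomial (Fin n) K) := by
    apply LinearIndepOn.mono (v := id) (s := Set.range fun a : Fin n →₀ ℕ => monomial a (1:K))
      (h := Set.image_subset_range _ _)
    have h2 := (basisMonomials (Fin n) K).linearIndependent.linearIndepOn_id
    rwa [coe_basisMonomials] at h2
  rw [finrank_span_set_eq_card hli, ← Set.ncard_eq_toFinset_card',
    Set.ncard_image_of_injective S hinj]

lemma hilb_eq {I : Ideal (MvPolynomial (Fin n) K)} {d : ℕ}
    (hgen : GenBy I (fun a => edeg a = d)) (j : ℕ) :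
    hilb I j = Set.ncard {b : Fin n →₀ ℕ | edeg b = j ∧ b ∈ expSet I} := by
  rw [hilb, inf_homog_eq_span hgen j, finrank_span_monomials
    ((finite_edeg_eq j).subset fun b hb => hb.1)]

end Aux

section Aux2

open Finsupp

variable {K : Type} [Field K] {n : ℕ}

lemma homogComp_mul_mem {I : Ideal (MvPolynomial (Fin n) K)} {d : ℕ}
    (hgen : GenBy I (fun a => edeg a = d)) (c g : MvPolynomial (Fin n) K) (hg : g ∈ I) :
    homogeneousComponent d (c * g) = (coeff 0 c) • homogeneousComponent d g := by
  have hsup : ∀ v ∈ g.support, d ≤ edeg v := fun v hv => by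
    obtain ⟨a, ⟨had, _⟩, hav⟩ := (mem_iff_exists hgen g).mp hg v hv
    exact had ▸ edeg_mono hav
  ext b
  rw [coeff_homogeneousComponent, MvPolynomial.coeff_smul, coeff_homogeneousComponent]
  by_cases hbd : b.degree = d
  · rw [if_pos hbd, if_pos hbd, MvPolynomial.coeff_mul]
    rw [Finset.sum_eq_single (0, b)]
    · rw [smul_eq_mul]
    · rintro ⟨u, v⟩ huv hne
      rw [Finset.HasAntidiagonal.mem_antidiagonal] at huv
      by_cases hv : coeff v g = 0
      · rw [hv, mul_zero]
      · exfalso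
        apply hne
        have hvd : d ≤ edeg v := hsup v (MvPolynomial.mem_support_iff.mpr hv)
        have hsum : edeg u + edeg v = d := by
          rw [← edeg_add, huv, edeg_eq_degree, hbd]
        have hu0 : u = 0 := edeg_eq_zero (by omega)
        subst hu0
        have hvb : v = b := by rw [← huv]; exact (zero_add v).symm
        subst hvb
        rfl
    · intro h
      exact absurd (Finset.HasAntidiagonal.mem_antidiagonal.mpr (zero_add b)) h
  · rw [if_neg hbd, if_neg hbd, smul_zero]

set_option maxHeartbeats 1000000 in
lemma mu_eq {I : Ideal (MvPolynomial (Fin n) K)} {d : ℕ}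
    (hgen : GenBy I (fun a => edeg a = d)) :
    mu I = Set.ncard {a : Fin n →₀ ℕ | edeg a = d ∧ a ∈ expSet I} := by
  classical
  set N : Set (Fin n →₀ ℕ) := {a | edeg a = d ∧ a ∈ expSet I} with hN
  have hNfin : N.Finite := (finite_edeg_eq d).subset fun b hb => hb.1
  have hFintype := hNfin.fintype
  set F : Finset (MvPolynomial (Fin n) K) :=
    hNfin.toFinset.image (fun a => (monomial a (1:K))) with hF
  have hFspan : I = Ideal.span (F : Set _) := by
    rw [hF, Finset.coe_image, Set.Finite.coe_toFinset]
    exact span_exp I d hgen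
  have hmem : F.card ∈ {m | ∃ G : Finset (MvPolynomial (Fin n) K),
      G.card = m ∧ I = Ideal.span (G : Set _)} := ⟨F, rfl, hFspan⟩
  apply le_antisymm
  · calc mu I ≤ F.card := Nat.sInf_le hmem
    _ ≤ hNfin.toFinset.card := Finset.card_image_le
    _ = N.ncard := (Set.ncard_eq_toFinset_card _ _).symm
  · apply le_csInf ⟨_, hmem⟩
    rintro m ⟨G, hGcard, hGspan⟩
    -- N.ncard = finrank of I_d ≤ finrank span of components ≤ card
    have hrank : Module.finrank K
        ↥(Submodule.restrictScalars K I ⊓ homogeneousSubmodule (Fin n) K d) = N.ncard := by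
      rw [inf_homog_eq_span hgen d, finrank_span_monomials hNfin]
    have hle : (Submodule.restrictScalars K I ⊓ homogeneousSubmodule (Fin n) K d) ≤
        Submodule.span K ((G.image (homogeneousComponent d) : Finset _) : Set _) := by
      rintro p ⟨hpI, hpH⟩
      have hpH' : MvPolynomial.IsHomogeneous p d := hpH
      have hpspan : p ∈ Submodule.span (MvPolynomial (Fin n) K) (G : Set _) := by
        rw [← Ideal.span, ← hGspan]; exact hpI
      obtain ⟨f, -, hf⟩ := Submodule.mem_span_finset.mp hpspan
      have hpd : homogeneousComponent d p = p := by
        ext b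
        rw [coeff_homogeneousComponent]
        by_cases hbd : b.degree = d
        · rw [if_pos hbd]
        · rw [if_neg hbd, eq_comm]
          exact hpH'.coeff_eq_zero hbd
      have : p = ∑ g ∈ G, (coeff 0 (f g)) • homogeneousComponent d g := by
        conv_lhs => rw [← hpd, ← hf]
        rw [map_sum]
        apply Finset.sum_congr rfl
        intro g hgG
        have hgI : g ∈ I := by
          rw [hGspan]; exact Ideal.subset_span hgG
        exact homogComp_mul_mem hgen (f g) g hgI
      rw [this]
      apply Submodule.sum_mem
      intro g hgG
      exact Submodule.smul_mem _ _
        (Submodule.subset_span (Finset.mem_coe.mpr (Finset.mem_image_of_mem _ hgG)))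
    haveI : FiniteDimensional K ↥(Submodule.span K
        ((G.image (homogeneousComponent d) : Finset _) : Set (MvPolynomial (Fin n) K))) :=
      FiniteDimensional.span_finset K _
    calc N.ncard = _ := hrank.symm
      _ ≤ Module.finrank K ↥(Submodule.span K
            ((G.image (homogeneousComponent d) : Finset _) : Set _)) :=
        Submodule.finrank_mono hle
      _ ≤ (G.image (homogeneousComponent d)).card := finrank_span_finset_le_card _
      _ ≤ G.card := Finset.card_image_le
      _ = m := hGcard

lemma lexGT_trichotomy {a b : Fin n →₀ ℕ} (h : a ≠ b) : lexGT a b ∨ lexGT b a := by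
  classical
  have hne : (Finset.univ.filter fun i : Fin n => a i ≠ b i).Nonempty := by
    rcases Finset.eq_empty_or_nonempty _ with he | hne
    · exfalso
      apply h
      ext i
      by_contra hi
      exact (Finset.eq_empty_iff_forall_notMem.mp he) i
        (Finset.mem_filter.mpr ⟨Finset.mem_univ _, hi⟩)
    · exact hne
  set i := Finset.min' _ hne with hidef
  have hi : a i ≠ b i := (Finset.mem_filter.mp (Finset.min'_mem _ hne)).2
  have hj : ∀ j, j < i → a j = b j := fun j hji => by
    by_contra hc
    exact absurd (Finset.min'_le _ j (Finset.mem_filter.mpr ⟨Finset.mem_univ _, hc⟩))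
      (not_le.mpr hji)
  rcases lt_or_gt_of_ne hi with h1 | h1
  · right
    exact ⟨i, fun j hj' => (hj j hj').symm, h1⟩
  · left
    exact ⟨i, hj, h1⟩

lemma lexclosed_eq {A B : Set (Fin n →₀ ℕ)} {dd : ℕ}
    (hA : ∀ x ∈ A, edeg x = dd) (hB : ∀ x ∈ B, edeg x = dd)
    (hAc : ∀ x ∈ A, ∀ c, edeg c = dd → lexGT c x → c ∈ A)
    (hBc : ∀ x ∈ B, ∀ c, edeg c = dd → lexGT c x → c ∈ B)
    (hfA : A.Finite) (hfB : B.Finite)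
    (hcard : A.ncard = B.ncard) : A = B := by
  have hsub : A ⊆ B ∨ B ⊆ A := by
    by_contra hc
    push_neg at hc
    obtain ⟨a, haA, haB⟩ := Set.not_subset.mp hc.1
    obtain ⟨b, hbB, hbA⟩ := Set.not_subset.mp hc.2
    have hab : a ≠ b := fun h => haB (h ▸ hbB)
    rcases lexGT_trichotomy hab with h | h
    · exact haB (hBc b hbB a (hA a haA) h)
    · exact hbA (hAc a haA b (hB b hbB) h)
  rcases hsub with h | h
  · exact Set.eq_of_subset_of_ncard_le h hcard.ge hfB
  · exact (Set.eq_of_subset_of_ncard_le h hcard.le hfA).symm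

end Aux2

section Aux3

variable {K : Type} [Field K] {n : ℕ}

lemma hilb_card {I : Ideal (MvPolynomial (Fin n) K)} {d : ℕ}
    (hgen : GenBy I (fun a => edeg a = d)) {S : Set (Fin n →₀ ℕ)}
    (hs : S = {a | edeg a = d ∧ a ∈ expSet I}) (j : ℕ) :
    hilb I j = Set.ncard {b | edeg b = j ∧ ∃ a ∈ S, a ≤ b} := by
  subst hs
  rw [hilb_eq hgen j]
  apply congrArg
  ext b
  simp only [Set.mem_setOf_eq]
  exact and_congr_right fun _ => expSet_iff hgen b

lemma shift_deg {d e : ℕ} {z : Fin n} {N : Set (Fin n →₀ ℕ)}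
    (hNd : ∀ a ∈ N, edeg a = d) :
    ∀ x ∈ (fun a => a + Finsupp.single z e) '' N, edeg x = d + e := by
  rintro x ⟨a, haN, rfl⟩
  rw [edeg_add, edeg_single, hNd a haN]

lemma shift_image_closed {N : Set (Fin n →₀ ℕ)} {d e : ℕ} (hn : 0 < n)
    (hNc : ∀ x ∈ N, ∀ c, edeg c = d → lexGT c x → c ∈ N) :
    ∀ x ∈ (fun a => a + Finsupp.single (⟨0, hn⟩ : Fin n) e) '' N,
      ∀ c, edeg c = d + e → lexGT c x →
        c ∈ (fun a => a + Finsupp.single (⟨0, hn⟩ : Fin n) e) '' N := by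
  set z : Fin n := ⟨0, hn⟩ with hz
  rintro x ⟨a, haN, rfl⟩ c hcd ⟨i, hji, hlt⟩
  have hze : z ≤ i := by
    rw [Fin.le_def]
    exact Nat.zero_le _
  have happ : ∀ y : Fin n, (a + Finsupp.single z e) y = a y + Finsupp.single z e y := fun y =>
    Finsupp.add_apply a _ y
  have hsz : Finsupp.single z e z = e := Finsupp.single_eq_same
  have hcz : e ≤ c z := by
    rcases eq_or_lt_of_le hze with hzi | hzi
    · have h1 : (a + Finsupp.single z e) i < c i := hlt
      rw [← hzi, happ, hsz] at h1
      omega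
    · have h1 : c z = (a + Finsupp.single z e) z := hji z hzi
      rw [happ, hsz] at h1
      omega
  have hbc : (c - Finsupp.single z e) + Finsupp.single z e = c :=
    tsub_add_cancel_of_le (Finsupp.single_le_iff.mpr hcz)
  set b := c - Finsupp.single z e with hb
  have hbapp : ∀ y : Fin n, b y + Finsupp.single z e y = c y := fun y => by
    rw [← Finsupp.add_apply, hbc]
  have hbdeg : edeg b = d := by
    have h2 := edeg_add b (Finsupp.single z e)
    rw [hbc, edeg_single] at h2
    omega
  have hblex : lexGT b a := by
    refine ⟨i, ?_, ?_⟩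
    · intro j hj
      have h1 : c j = (a + Finsupp.single z e) j := hji j hj
      have h2 := hbapp j
      rw [h1, happ] at h2
      omega
    · have h2 := hbapp i
      have h3 : (a + Finsupp.single z e) i < c i := hlt
      rw [happ] at h3
      omega
  exact ⟨b, hNc a haN b hbdeg hblex, hbc⟩

lemma shift_slice {N : Set (Fin n →₀ ℕ)} {d e : ℕ} (hn : 0 < n) (δ : ℕ)
    (hNd : ∀ a ∈ N, edeg a = d) :
    {c | edeg c = (d + e) + δ ∧ ∃ a ∈ (fun a => a + Finsupp.single (⟨0, hn⟩ : Fin n) e) '' N, a ≤ c}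
      = (fun a => a + Finsupp.single (⟨0, hn⟩ : Fin n) e) ''
        {b | edeg b = d + δ ∧ ∃ a ∈ N, a ≤ b} := by
  set z : Fin n := ⟨0, hn⟩ with hz
  ext c
  simp only [Set.mem_setOf_eq, Set.mem_image]
  constructor
  · rintro ⟨hcd, a, ⟨a₀, ha₀N, rfl⟩, hle⟩
    have hcz : e ≤ c z := by
      have h1 := Finsupp.le_def.mp hle z
      rw [Finsupp.add_apply, Finsupp.single_eq_same] at h1
      omega
    have hbc : (c - Finsupp.single z e) + Finsupp.single z e = c :=
      tsub_add_cancel_of_le (Finsupp.single_le_iff.mpr hcz)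
    set b := c - Finsupp.single z e with hb
    have hbapp : ∀ y : Fin n, b y + Finsupp.single z e y = c y := fun y => by
      rw [← Finsupp.add_apply, hbc]
    have hbdeg : edeg b = d + δ := by
      have h2 := edeg_add b (Finsupp.single z e)
      rw [hbc, edeg_single] at h2
      omega
    refine ⟨b, ⟨hbdeg, a₀, ha₀N, ?_⟩, hbc⟩
    rw [Finsupp.le_def]
    intro y
    have h1 := Finsupp.le_def.mp hle y
    have h2 := hbapp y
    rw [Finsupp.add_apply] at h1
    omega
  · rintro ⟨b, ⟨hbd, a, haN, hab⟩, rfl⟩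
    refine ⟨?_, (fun a => a + Finsupp.single z e) a, ⟨a, haN, rfl⟩, ?_⟩
    · rw [edeg_add, edeg_single, hbd]
      omega
    · rw [Finsupp.le_def]
      intro y
      simp only [Finsupp.add_apply]
      exact Nat.add_le_add_right (Finsupp.le_def.mp hab y) _

end Aux3

/-- Corollary `lex_ideals`(b),(c). Suppose `I` and `I'` are lexsegment
ideals of `S = K[x_1,…,x_n]` generated by monomials of degree `d` and `d'` respectively,
with `μ(I) = μ(I')` and `d' ≥ d`. Then `H_{I'}(T) = T^{d'−d} H_I(T)`; equivalently,
`H(I, d+δ) = H(I', d'+δ)` for all `δ ≥ 0`. -/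
theorem lexsegment_hilbert_shift {K : Type} [Field K] {n d d' : ℕ}
    (I I' : Ideal (MvPolynomial (Fin n) K))
    (hlex : IsLexsegment I) (hlex' : IsLexsegment I')
    (hgen : GenBy I (fun a => edeg a = d)) (hgen' : GenBy I' (fun a => edeg a = d'))
    (hmu : mu I = mu I') (hdd : d ≤ d') :
    ((PowerSeries.mk fun j => (hilb I' j)) =
      (PowerSeries.X : PowerSeries ℕ) ^ (d' - d) * PowerSeries.mk fun j => hilb I j) ∧
    (∀ δ : ℕ, hilb I (d + δ) = hilb I' (d' + δ)) := by
  classical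
  have hNfin : ({a | edeg a = d ∧ a ∈ expSet I} : Set (Fin n →₀ ℕ)).Finite :=
    (finite_edeg_eq d).subset fun b hb => hb.1
  have hN'fin : ({a | edeg a = d' ∧ a ∈ expSet I'} : Set (Fin n →₀ ℕ)).Finite :=
    (finite_edeg_eq d').subset fun b hb => hb.1
  have hcard : ({a | edeg a = d ∧ a ∈ expSet I} : Set (Fin n →₀ ℕ)).ncard
      = ({a | edeg a = d' ∧ a ∈ expSet I'} : Set (Fin n →₀ ℕ)).ncard := by
    rw [← mu_eq hgen, ← mu_eq hgen', hmu]
  have hNd : ∀ a ∈ ({a | edeg a = d ∧ a ∈ expSet I} : Set (Fin n →₀ ℕ)), edeg a = d :=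
    fun a ha => ha.1
  have hN'd : ∀ a ∈ ({a | edeg a = d' ∧ a ∈ expSet I'} : Set (Fin n →₀ ℕ)), edeg a = d' :=
    fun a ha => ha.1
  have hNc : ∀ x ∈ ({a | edeg a = d ∧ a ∈ expSet I} : Set (Fin n →₀ ℕ)),
      ∀ c, edeg c = d → lexGT c x → c ∈ ({a | edeg a = d ∧ a ∈ expSet I} : Set (Fin n →₀ ℕ)) :=
    fun x hx c hc hgt => ⟨hc, hlex.2 x c hx.2 (by rw [hc, hx.1]) hgt⟩
  have hN'c : ∀ x ∈ ({a | edeg a = d' ∧ a ∈ expSet I'} : Set (Fin n →₀ ℕ)),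
      ∀ c, edeg c = d' → lexGT c x →
        c ∈ ({a | edeg a = d' ∧ a ∈ expSet I'} : Set (Fin n →₀ ℕ)) :=
    fun x hx c hc hgt => ⟨hc, hlex'.2 x c hx.2 (by rw [hc, hx.1]) hgt⟩
  have key : ∀ δ : ℕ, hilb I (d + δ) = hilb I' (d' + δ) := by
    intro δ
    rcases eq_or_lt_of_le hdd with hd | hd
    · subst hd
      have hNN' : ({a | edeg a = d ∧ a ∈ expSet I} : Set (Fin n →₀ ℕ))
          = {a | edeg a = d ∧ a ∈ expSet I'} :=
        lexclosed_eq hNd hN'd hNc hN'c hNfin hN'fin hcard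
      rw [hilb_card hgen rfl (d + δ), hilb_card hgen' rfl (d + δ), hNN']
    · rcases Set.eq_empty_or_nonempty ({a | edeg a = d ∧ a ∈ expSet I} : Set (Fin n →₀ ℕ))
        with hNe | hNne
      · have hN'e : ({a | edeg a = d' ∧ a ∈ expSet I'} : Set (Fin n →₀ ℕ)) = ∅ := by
          rw [← Set.ncard_eq_zero hN'fin, ← hcard, hNe, Set.ncard_empty]
        rw [hilb_card hgen rfl (d + δ), hilb_card hgen' rfl (d' + δ), hNe, hN'e]
        simp
      · have hn : 0 < n := by
          by_contra hc
          have hn0 : n = 0 := by omega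
          subst hn0
          have hN'ne : ({a | edeg a = d' ∧ a ∈ expSet I'} : Set (Fin 0 →₀ ℕ)).Nonempty := by
            apply Set.nonempty_of_ncard_ne_zero
            rw [← hcard]
            exact ((Set.ncard_pos hNfin).mpr hNne).ne'
          obtain ⟨a', ha'⟩ := hN'ne
          have h0 : edeg a' = 0 := by simp [edeg]
          have hd' : edeg a' = d' := ha'.1
          omega
        set z : Fin n := ⟨0, hn⟩ with hzdef
        set e : ℕ := d' - d with hedef
        have hde : d' = d + e := by omega
        have hinj : Function.Injective (fun a : Fin n →₀ ℕ => a + Finsupp.single z e) :=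
          fun a b hab => by
            ext y
            have := congrArg (fun f : Fin n →₀ ℕ => f y) hab
            simp only [Finsupp.add_apply] at this
            omega
        have hσfin : ((fun a : Fin n →₀ ℕ => a + Finsupp.single z e) ''
            {a | edeg a = d ∧ a ∈ expSet I}).Finite := hNfin.image _
        have hσcard : ((fun a : Fin n →₀ ℕ => a + Finsupp.single z e) ''
            {a | edeg a = d ∧ a ∈ expSet I}).ncard
              = ({a | edeg a = d' ∧ a ∈ expSet I'} : Set (Fin n →₀ ℕ)).ncard := by
          rw [Set.ncard_image_of_injective _ hinj, hcard]
        have hN'σ : ({a | edeg a = d' ∧ a ∈ expSet I'} : Set (Fin n →₀ ℕ))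
            = (fun a : Fin n →₀ ℕ => a + Finsupp.single z e) ''
              {a | edeg a = d ∧ a ∈ expSet I} := by
          apply lexclosed_eq (dd := d') hN'd
          · intro x hx
            rw [hde]
            exact shift_deg hNd x hx
          · exact hN'c
          · intro x hx c hc hgt
            rw [hde] at hc
            exact shift_image_closed hn hNc x hx c hc hgt
          · exact hN'fin
          · exact hσfin
          · rw [hσcard]
        rw [hilb_card hgen rfl (d + δ), hilb_card hgen' rfl (d' + δ), hN'σ,
          show d' + δ = (d + e) + δ by omega, shift_slice hn δ hNd,
          Set.ncard_image_of_injective _ hinj]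
  have hz : ∀ j, j < d → hilb I j = 0 := by
    intro j hj
    have hempty : {b : Fin n →₀ ℕ | edeg b = j ∧
        ∃ a ∈ ({a | edeg a = d ∧ a ∈ expSet I} : Set (Fin n →₀ ℕ)), a ≤ b} = ∅ := by
      ext b
      simp only [Set.mem_empty_iff_false, iff_false, Set.mem_setOf_eq, not_and]
      rintro hbj ⟨a, ⟨had, _⟩, hab⟩
      have := edeg_mono hab
      omega
    rw [hilb_card hgen rfl j, hempty, Set.ncard_empty]
  have hz' : ∀ j, j < d' → hilb I' j = 0 := by
    intro j hj
    have hempty : {b : Fin n →₀ ℕ | edeg b = j ∧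
        ∃ a ∈ ({a | edeg a = d' ∧ a ∈ expSet I'} : Set (Fin n →₀ ℕ)), a ≤ b} = ∅ := by
      ext b
      simp only [Set.mem_empty_iff_false, iff_false, Set.mem_setOf_eq, not_and]
      rintro hbj ⟨a, ⟨had, _⟩, hab⟩
      have := edeg_mono hab
      omega
    rw [hilb_card hgen' rfl j, hempty, Set.ncard_empty]
  refine ⟨?_, key⟩
  ext j
  rw [PowerSeries.coeff_mk, PowerSeries.coeff_X_pow_mul', PowerSeries.coeff_mk]
  split_ifs with h
  · by_cases hj : d' ≤ j
    · have h1 : j - (d' - d) = d + (j - d') := by omega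
      rw [h1, key (j - d')]
      congr 1
      omega
    · rw [hz' j (by omega), hz _ (by omega)]
  · exact hz' j (by omega)
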